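/- The two gap increasing words u = 0 1 0³ 1 0⁵ 1 0⁹ 1 0¹⁵ 1 0²⁵ 1 ... with gap function g_u(1)=2, g_u(2)=4, g_u(i)=g_u(i-2)+g_u(i-1) for i ≥ 3, and v = 0² 1 0³ 1 0⁶ 1 0¹⁰ 1 0¹⁷ 1 0²⁸ 1 ... with gap function g_v(1)=3, g_v(2)=4, g_v(i)=g_v(i-2)+g_v(i-1) for i ≥ 3, are distinct words but have the same subword complexity function, namely f(n) = n+1 for n ≤ 4 and f(n) = 2n-3 for n ≥ 5. -/

import Mathlib

/-- `u` occurs in `w` starting at position `i` (positions are 1-indexed). -/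
def FactorAt (w : ℕ → Fin 2) (i : ℕ) (u : List (Fin 2)) : Prop :=
  u = (List.range u.length).map (fun k => w (i + k))

/-- `u` is a subword (factor) of the infinite word `w`. -/
def IsFactor (w : ℕ → Fin 2) (u : List (Fin 2)) : Prop :=
  ∃ i, 1 ≤ i ∧ FactorAt w i u

/-- The subword complexity function of `w`. -/
noncomputable def complexity (w : ℕ → Fin 2) (n : ℕ) : ℕ :=
  Set.ncard {u : List (Fin 2) | u.length = n ∧ IsFactor w u}

/-- `G` is the 1-distribution function of `w`: `G 0 = 0` and `G i` is the
position of the `i`-th `1` of `w` (positions 1-indexed). -/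
def OneDistrib (w : ℕ → Fin 2) (G : ℕ → ℕ) : Prop :=
  G 0 = 0 ∧ StrictMono G ∧ ∀ p, 1 ≤ p → (w p = 1 ↔ ∃ i, 1 ≤ i ∧ G i = p)

/-- The gap function associated with a 1-distribution function `G`. -/
def gap (G : ℕ → ℕ) (i : ℕ) : ℕ := G i - G (i - 1)

/-- The gap function is strictly increasing. -/
def GapIncreasing (G : ℕ → ℕ) : Prop :=
  ∀ i, 1 ≤ i → gap G i < gap G (i + 1)

/-- `u` is a right special factor of `w`. -/
def RightSpecial (w : ℕ → Fin 2) (u : List (Fin 2)) : Prop :=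
  IsFactor w (u ++ [0]) ∧ IsFactor w (u ++ [1])

/-- The gap function of the word `u = 0 1 0³ 1 0⁵ 1 0⁹ 1 0¹⁵ 1 0²⁵ 1 ...`. -/
def gu : ℕ → ℕ
  | 0 => 0
  | 1 => 2
  | 2 => 4
  | n + 3 => gu (n + 1) + gu (n + 2)

/-- The gap function of the word `v = 0² 1 0³ 1 0⁶ 1 0¹⁰ 1 0¹⁷ 1 0²⁸ 1 ...`. -/
def gv : ℕ → ℕ
  | 0 => 0
  | 1 => 3
  | 2 => 4
  | n + 3 => gv (n + 1) + gv (n + 2)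

/-- The 1-distribution function of `u`. -/
def Gu (i : ℕ) : ℕ := ∑ j ∈ Finset.range (i + 1), gu j

/-- The 1-distribution function of `v`. -/
def Gv (i : ℕ) : ℕ := ∑ j ∈ Finset.range (i + 1), gv j

/- auxiliary development -/


def auxWin (w : ℕ → Fin 2) (i n : ℕ) : List (Fin 2) := (List.range n).map fun k => w (i + k)

def auxQ (G : ℕ → ℕ) (p : ℕ) : Prop := ∃ k, 1 ≤ k ∧ G k = p

def auxC (G : ℕ → ℕ) (n : ℕ) : Finset (ℕ × ℕ) :=
  (Finset.range n ×ˢ Finset.range n).filter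
    fun q => 1 ≤ q.1 ∧ q.2 < gap G q.1 ∧ q.2 + gap G (q.1 + 1) + 1 ≤ n

def auxP (G : ℕ → ℕ) (n : ℕ) : Finset (ℕ × ℕ) :=
  insert (0,0) (((Finset.range n).image fun a => (0, a+1)) ∪ auxC G n)

def auxStart (G : ℕ → ℕ) (n : ℕ) : ℕ × ℕ → ℕ
  | (0, 0) => G (n+1) + 1
  | (0, a+1) => G (n+1) - a
  | (k+1, a) => G (k+1) - a

section Master

variable {w : ℕ → Fin 2} {G : ℕ → ℕ}

lemma auxGadd (hm : StrictMono G) (i : ℕ) : G (i+1) = G i + gap G (i+1) := by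
  have h : G i ≤ G (i+1) := (hm (Nat.lt_succ_self i)).le
  simp only [gap, Nat.add_sub_cancel]
  omega

lemma auxGlb (h1 : 2 ≤ gap G 1) (h2 : gap G 2 = 4)
    (hrec : ∀ i, 1 ≤ i → gap G (i+2) = gap G i + gap G (i+1)) :
    ∀ k, 1 ≤ k → k + 1 ≤ gap G k := by
  intro k
  induction k using Nat.strong_induction_on with
  | _ k ih =>
    match k with
    | 0 => intro h; omega
    | 1 => intro _; omega
    | 2 => intro _; omega
    | (m+3) =>
      intro _
      have e : gap G (m+3) = gap G (m+1) + gap G (m+2) := hrec (m+1) (by omega)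
      have a := ih (m+1) (by omega) (by omega)
      have b := ih (m+2) (by omega) (by omega)
      omega

lemma auxGlt (h1 : 2 ≤ gap G 1) (h12 : gap G 1 < gap G 2) (h2 : gap G 2 = 4)
    (hrec : ∀ i, 1 ≤ i → gap G (i+2) = gap G i + gap G (i+1)) :
    ∀ i, 1 ≤ i → gap G i < gap G (i+1) := by
  intro i hi
  match i, hi with
  | 1, _ => exact h12
  | (m+2), _ =>
    have e : gap G (m+3) = gap G (m+1) + gap G (m+2) := hrec (m+1) (by omega)
    have a := auxGlb h1 h2 hrec (m+1) (by omega)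
    show gap G (m+2) < gap G (m+3)
    omega

lemma auxGmono (h1 : 2 ≤ gap G 1) (h12 : gap G 1 < gap G 2) (h2 : gap G 2 = 4)
    (hrec : ∀ i, 1 ≤ i → gap G (i+2) = gap G i + gap G (i+1)) :
    ∀ i j, 1 ≤ i → i < j → gap G i < gap G j := by
  intro i j hi hij
  induction j with
  | zero => omega
  | succ m ih =>
    rcases Nat.lt_or_ge i m with h | h
    · exact lt_trans (ih h) (auxGlt h1 h12 h2 hrec m (by omega))
    · have : i = m := by omega
      subst this
      exact auxGlt h1 h12 h2 hrec i hi

lemma auxQpos (h0 : G 0 = 0) (hm : StrictMono G) {p : ℕ} (h : auxQ G p) : 1 ≤ p := by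
  obtain ⟨k, hk, hkp⟩ := h
  have := hm (show 0 < k by omega)
  omega

lemma auxNotQ (hm : StrictMono G) {j p : ℕ} (h1 : G j < p) (h2 : p < G (j+1)) :
    ¬ auxQ G p := by
  rintro ⟨k, hk, rfl⟩
  rcases Nat.lt_or_ge j k with h | h
  · have := hm.monotone (show j+1 ≤ k by omega)
    omega
  · have := hm.monotone (show k ≤ j from h)
    omega

lemma auxWone (hG : OneDistrib w G) {p : ℕ} (hp : 1 ≤ p) : w p = 1 ↔ auxQ G p :=
  hG.2.2 p hp

private lemma fin2_eq_of_iff {x y : Fin 2} (h : x = 1 ↔ y = 1) : x = y := by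
  fin_cases x <;> fin_cases y <;> simp_all

lemma auxWin_length (w : ℕ → Fin 2) (i n : ℕ) : (auxWin w i n).length = n := by
  simp [auxWin]

lemma auxWin_eq (hG : OneDistrib w G) {i j n : ℕ} (hi : 1 ≤ i) (hj : 1 ≤ j)
    (h : ∀ m, m < n → (auxQ G (i+m) ↔ auxQ G (j+m))) :
    auxWin w i n = auxWin w j n := by
  unfold auxWin
  apply List.map_congr_left
  intro m hm
  rw [List.mem_range] at hm
  exact fin2_eq_of_iff (by
    rw [auxWone hG (by omega), auxWone hG (by omega)]
    exact h m hm)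

lemma auxWin_eq_iff (hG : OneDistrib w G) {i j n : ℕ} (hi : 1 ≤ i) (hj : 1 ≤ j)
    (h : auxWin w i n = auxWin w j n) :
    ∀ m, m < n → (auxQ G (i+m) ↔ auxQ G (j+m)) := by
  intro m hm
  have : (auxWin w i n)[m]'(by simp [auxWin]; omega) = (auxWin w j n)[m]'(by simp [auxWin]; omega) := by
    simp only [h]
  simp only [auxWin, List.getElem_map, List.getElem_range] at this
  rw [← auxWone hG (show 1 ≤ i + m by omega), ← auxWone hG (show 1 ≤ j + m by omega), this]

lemma auxFactor_iff (w : ℕ → Fin 2) (n : ℕ) (u : List (Fin 2)) :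
    (u.length = n ∧ IsFactor w u) ↔ ∃ i, 1 ≤ i ∧ u = auxWin w i n := by
  constructor
  · rintro ⟨hl, i, hi, hf⟩
    exact ⟨i, hi, by simp only [FactorAt, hl] at hf; exact hf⟩
  · rintro ⟨i, hi, rfl⟩
    exact ⟨auxWin_length w i n, i, hi, by simp [FactorAt, auxWin]⟩

end Master

section Master2
variable {G : ℕ → ℕ}

lemma auxSpec00 (hm : StrictMono G) (h1 : 2 ≤ gap G 1) (h2 : gap G 2 = 4)
    (hrec : ∀ i, 1 ≤ i → gap G (i+2) = gap G i + gap G (i+1)) (n : ℕ) :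
    ∀ m, m < n → ¬ auxQ G (G (n+1) + 1 + m) := by
  intro m hm'
  have e : G (n+2) = G (n+1) + gap G (n+2) := auxGadd hm (n+1)
  have b := auxGlb h1 h2 hrec (n+2) (by omega)
  exact auxNotQ (j := n+1) hm (by omega) (show G (n+1) + 1 + m < G (n+2) by omega)

lemma auxSpec01 (hm : StrictMono G) (h1 : 2 ≤ gap G 1) (h2 : gap G 2 = 4)
    (hrec : ∀ i, 1 ≤ i → gap G (i+2) = gap G i + gap G (i+1))
    {n a : ℕ} (ha : a < n) :
    ∀ m, m < n → (auxQ G (G (n+1) - a + m) ↔ m = a) := by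
  have e1 : G (n+1) = G n + gap G (n+1) := auxGadd hm n
  have e2 : G (n+2) = G (n+1) + gap G (n+2) := auxGadd hm (n+1)
  have b1 := auxGlb h1 h2 hrec (n+1) (by omega)
  have b2 := auxGlb h1 h2 hrec (n+2) (by omega)
  intro m hmn
  constructor
  · intro hq
    by_contra hne
    rcases Nat.lt_or_ge m a with h | h
    · exact auxNotQ (j := n) hm (by omega) (by omega) hq
    · have h' : a < m := by omega
      exact auxNotQ (j := n+1) hm (by omega) (show G (n+1) - a + m < G (n+2) by omega) hq
  · rintro rfl
    exact ⟨n+1, by omega, by omega⟩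

lemma auxSpecCa (hm : StrictMono G) {t a : ℕ} (hak : a < gap G (t+1)) :
    ∀ m, m < a → ¬ auxQ G (G (t+1) - a + m) := by
  intro m hma
  have e : G (t+1) = G t + gap G (t+1) := auxGadd hm t
  exact auxNotQ (j := t) hm (by omega) (by omega)

lemma auxSpecCb (hm : StrictMono G) {t a : ℕ} (hak : a < gap G (t+1)) :
    auxQ G (G (t+1) - a + a) := by
  have e : G (t+1) = G t + gap G (t+1) := auxGadd hm t
  exact ⟨t+1, by omega, by omega⟩

lemma auxSpecCc (hm : StrictMono G) {t a : ℕ} (hak : a < gap G (t+1)) :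
    ∀ m, a < m → m < a + gap G (t+2) → ¬ auxQ G (G (t+1) - a + m) := by
  intro m hm1 hm2
  have e : G (t+1) = G t + gap G (t+1) := auxGadd hm t
  have e2 : G (t+2) = G (t+1) + gap G (t+2) := auxGadd hm (t+1)
  exact auxNotQ (j := t+1) hm (by omega) (show G (t+1) - a + m < G (t+2) by omega)

lemma auxSpecCd (hm : StrictMono G) {t a : ℕ} (hak : a < gap G (t+1)) :
    auxQ G (G (t+1) - a + (a + gap G (t+2))) := by
  have e : G (t+1) = G t + gap G (t+1) := auxGadd hm t
  have e2 : G (t+2) = G (t+1) + gap G (t+2) := auxGadd hm (t+1)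
  exact ⟨t+2, by omega, by omega⟩

end Master2

section Master3
variable {w : ℕ → Fin 2} {G : ℕ → ℕ}

lemma auxC_mem {n k a : ℕ} :
    (k, a) ∈ auxC G n ↔ (k < n ∧ a < n ∧ 1 ≤ k ∧ a < gap G k ∧ a + gap G (k+1) + 1 ≤ n) := by
  simp [auxC, Finset.mem_filter, Finset.mem_product, Finset.mem_range, and_assoc]

lemma auxP_mem {n : ℕ} {q : ℕ × ℕ} :
    q ∈ auxP G n ↔ q = (0,0) ∨ (∃ a, a < n ∧ q = (0, a+1)) ∨ q ∈ auxC G n := by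
  simp only [auxP, Finset.mem_insert, Finset.mem_union, Finset.mem_image, Finset.mem_range]
  constructor
  · rintro (h | ⟨a, ha, h⟩ | h)
    · exact Or.inl h
    · exact Or.inr (Or.inl ⟨a, ha, h.symm⟩)
    · exact Or.inr (Or.inr h)
  · rintro (h | ⟨a, ha, h⟩ | h)
    · exact Or.inl h
    · exact Or.inr (Or.inl ⟨a, ha, h.symm⟩)
    · exact Or.inr (Or.inr h)

lemma auxSurj (hG : OneDistrib w G) (h1 : 2 ≤ gap G 1) (h12 : gap G 1 < gap G 2)
    (h2 : gap G 2 = 4)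
    (hrec : ∀ i, 1 ≤ i → gap G (i+2) = gap G i + gap G (i+1))
    {n : ℕ} (hn : 1 ≤ n) {i : ℕ} (hi : 1 ≤ i) :
    ∃ q ∈ auxP G n, auxWin w (auxStart G n q) n = auxWin w i n := by
  classical
  have h0 := hG.1
  have hm := hG.2.1
  by_cases hQ : ∃ m, m < n ∧ auxQ G (i+m)
  · have hfind := Nat.find_spec hQ
    set m0 := Nat.find hQ with hm0def
    obtain ⟨hm0n, k0, hk01, hk0⟩ := hfind
    have hmin : ∀ m, m < m0 → ¬ auxQ G (i+m) := by
      intro m hmm0 hq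
      exact Nat.find_min hQ hmm0 ⟨by omega, hq⟩
    obtain ⟨t, rfl⟩ : ∃ t, k0 = t+1 := ⟨k0-1, by omega⟩
    have hGt : G t < i := by
      by_contra hc
      push_neg at hc
      rcases Nat.eq_zero_or_pos t with rfl | ht
      · rw [h0] at hc; omega
      · have hlt : G t < G (t+1) := hm (by omega)
        exact hmin (G t - i) (by omega) ⟨t, by omega, by omega⟩
    have egap : G (t+1) = G t + gap G (t+1) := auxGadd hm t
    by_cases hQ2 : ∃ m, m0 < m ∧ m < n ∧ auxQ G (i+m)
    · obtain ⟨m', hm'1, hm'2, k', hk'1, hk'⟩ := hQ2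
      have hk'k : t+1 < k' := by
        have hlt : G (t+1) < G k' := by omega
        exact hm.lt_iff_lt.mp hlt
      have hG1 : G (t+2) ≤ G k' := hm.monotone (by omega)
      have egap2 : G (t+2) = G (t+1) + gap G (t+2) := auxGadd hm (t+1)
      have hb := auxGlb h1 h2 hrec (t+2) (by omega)
      refine ⟨(t+1, m0), ?_, ?_⟩
      · rw [auxP_mem]
        right; right
        rw [auxC_mem]
        refine ⟨by omega, by omega, by omega, by omega, ?_⟩
        show m0 + gap G (t+2) + 1 ≤ n
        omega
      · have hst : auxStart G n (t+1, m0) = i := by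
          show G (t+1) - m0 = i
          omega
        rw [hst]
    · push_neg at hQ2
      refine ⟨(0, m0+1), ?_, ?_⟩
      · rw [auxP_mem]; right; left; exact ⟨m0, hm0n, rfl⟩
      · have hst : auxStart G n (0, m0+1) = G (n+1) - m0 := rfl
        rw [hst]
        have hb1 := auxGlb h1 h2 hrec (n+1) (by omega)
        have eg : G (n+1) = G n + gap G (n+1) := auxGadd hm n
        apply auxWin_eq hG (by omega) hi
        intro m hmn
        rw [auxSpec01 hm h1 h2 hrec hm0n m hmn]
        constructor
        · rintro rfl
          exact ⟨t+1, by omega, hk0⟩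
        · intro hq
          by_contra hne
          rcases Nat.lt_or_ge m m0 with h | h
          · exact hmin m h hq
          · exact hQ2 m (by omega) hmn hq
  · push_neg at hQ
    refine ⟨(0,0), ?_, ?_⟩
    · rw [auxP_mem]; left; rfl
    · have hst : auxStart G n (0,0) = G (n+1) + 1 := rfl
      rw [hst]
      apply auxWin_eq hG (by omega) hi
      intro m hmn
      exact iff_of_false (auxSpec00 hm h1 h2 hrec n m hmn) (hQ m hmn)

end Master3

section Master4
variable {w : ℕ → Fin 2} {G : ℕ → ℕ}

lemma auxInj (hG : OneDistrib w G) (h1 : 2 ≤ gap G 1) (h12 : gap G 1 < gap G 2)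
    (h2 : gap G 2 = 4)
    (hrec : ∀ i, 1 ≤ i → gap G (i+2) = gap G i + gap G (i+1)) {n : ℕ} (hn : 1 ≤ n) :
    Set.InjOn (fun q => auxWin w (auxStart G n q) n) ↑(auxP G n) := by
  have h0 := hG.1
  have hm := hG.2.1
  have hb1 := auxGlb h1 h2 hrec (n+1) (by omega)
  have eg : G (n+1) = G n + gap G (n+1) := auxGadd hm n
  intro q hq q' hq' heq
  rw [Finset.mem_coe, auxP_mem] at hq hq'
  simp only at heq
  rcases hq with rfl | ⟨a, han, rfl⟩ | hqC
  · rcases hq' with rfl | ⟨a', han', rfl⟩ | hq'C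
    · rfl
    · exfalso
      have hst : auxStart G n (0,0) = G (n+1) + 1 := rfl
      have hst' : auxStart G n (0,a'+1) = G (n+1) - a' := rfl
      rw [hst, hst'] at heq
      have hiff := auxWin_eq_iff hG (by omega) (by omega) heq
      have hQ' : auxQ G (G (n+1) - a' + a') :=
        (auxSpec01 hm h1 h2 hrec han' a' han').mpr rfl
      exact auxSpec00 hm h1 h2 hrec n a' han' ((hiff a' han').mpr hQ')
    · exfalso
      obtain ⟨k, a'⟩ := q'
      rw [auxC_mem] at hq'C
      obtain ⟨hkn, han', hk1, hak, hsum⟩ := hq'C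
      obtain ⟨t, rfl⟩ : ∃ s, k = s+1 := ⟨k-1, by omega⟩
      have hsum2 : a' + gap G (t+2) + 1 ≤ n := hsum
      have egt : G (t+1) = G t + gap G (t+1) := auxGadd hm t
      have hst : auxStart G n (0,0) = G (n+1) + 1 := rfl
      have hst' : auxStart G n (t+1,a') = G (t+1) - a' := rfl
      rw [hst, hst'] at heq
      have hiff := auxWin_eq_iff hG (by omega) (by omega) heq
      have hQ' : auxQ G (G (t+1) - a' + a') := auxSpecCb hm hak
      exact auxSpec00 hm h1 h2 hrec n a' han' ((hiff a' han').mpr hQ')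
  · rcases hq' with rfl | ⟨a', han', rfl⟩ | hq'C
    · exfalso
      have hst : auxStart G n (0,a+1) = G (n+1) - a := rfl
      have hst' : auxStart G n (0,0) = G (n+1) + 1 := rfl
      rw [hst, hst'] at heq
      have hiff := auxWin_eq_iff hG (by omega) (by omega) heq
      have hQ : auxQ G (G (n+1) - a + a) :=
        (auxSpec01 hm h1 h2 hrec han a han).mpr rfl
      exact auxSpec00 hm h1 h2 hrec n a han ((hiff a han).mp hQ)
    · have hst : auxStart G n (0,a+1) = G (n+1) - a := rfl
      have hst' : auxStart G n (0,a'+1) = G (n+1) - a' := rfl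
      rw [hst, hst'] at heq
      have hiff := auxWin_eq_iff hG (by omega) (by omega) heq
      have hQ : auxQ G (G (n+1) - a + a) :=
        (auxSpec01 hm h1 h2 hrec han a han).mpr rfl
      have haa : a = a' :=
        (auxSpec01 hm h1 h2 hrec han' a han).mp ((hiff a han).mp hQ)
      rw [haa]
    · exfalso
      obtain ⟨k, a'⟩ := q'
      rw [auxC_mem] at hq'C
      obtain ⟨hkn, han', hk1, hak, hsum⟩ := hq'C
      obtain ⟨t, rfl⟩ : ∃ s, k = s+1 := ⟨k-1, by omega⟩
      have hsum2 : a' + gap G (t+2) + 1 ≤ n := hsum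
      have hbt := auxGlb h1 h2 hrec (t+2) (by omega)
      have egt : G (t+1) = G t + gap G (t+1) := auxGadd hm t
      have hst : auxStart G n (0,a+1) = G (n+1) - a := rfl
      have hst' : auxStart G n (t+1,a') = G (t+1) - a' := rfl
      rw [hst, hst'] at heq
      have hiff := auxWin_eq_iff hG (by omega) (by omega) heq
      have hQ1 : auxQ G (G (t+1) - a' + a') := auxSpecCb hm hak
      have hQ2 : auxQ G (G (t+1) - a' + (a' + gap G (t+2))) := auxSpecCd hm hak
      have e1 : a' = a :=
        (auxSpec01 hm h1 h2 hrec han a' han').mp ((hiff a' han').mpr hQ1)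
      have e2 : a' + gap G (t+2) = a :=
        (auxSpec01 hm h1 h2 hrec han _ (by omega)).mp ((hiff _ (by omega)).mpr hQ2)
      omega
  · obtain ⟨k, a⟩ := q
    rw [auxC_mem] at hqC
    obtain ⟨hkn, han, hk1, hak, hsum⟩ := hqC
    obtain ⟨t, rfl⟩ : ∃ s, k = s+1 := ⟨k-1, by omega⟩
    have hsum2 : a + gap G (t+2) + 1 ≤ n := hsum
    have hbt := auxGlb h1 h2 hrec (t+2) (by omega)
    have egt : G (t+1) = G t + gap G (t+1) := auxGadd hm t
    have hst : auxStart G n (t+1,a) = G (t+1) - a := rfl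
    rw [hst] at heq
    have hQ1 : auxQ G (G (t+1) - a + a) := auxSpecCb hm hak
    have hQ2 : auxQ G (G (t+1) - a + (a + gap G (t+2))) := auxSpecCd hm hak
    rcases hq' with rfl | ⟨a', han', rfl⟩ | hq'C
    · exfalso
      have hst' : auxStart G n (0,0) = G (n+1) + 1 := rfl
      rw [hst'] at heq
      have hiff := auxWin_eq_iff hG (by omega) (by omega) heq
      exact auxSpec00 hm h1 h2 hrec n a han ((hiff a han).mp hQ1)
    · exfalso
      have hst' : auxStart G n (0,a'+1) = G (n+1) - a' := rfl
      rw [hst'] at heq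
      have hiff := auxWin_eq_iff hG (by omega) (by omega) heq
      have e1 : a = a' :=
        (auxSpec01 hm h1 h2 hrec han' a han).mp ((hiff a han).mp hQ1)
      have e2 : a + gap G (t+2) = a' :=
        (auxSpec01 hm h1 h2 hrec han' _ (by omega)).mp ((hiff _ (by omega)).mp hQ2)
      omega
    · obtain ⟨k', a'⟩ := q'
      rw [auxC_mem] at hq'C
      obtain ⟨hkn', han', hk1', hak', hsum'⟩ := hq'C
      obtain ⟨t', rfl⟩ : ∃ s, k' = s+1 := ⟨k'-1, by omega⟩
      have hsum2' : a' + gap G (t'+2) + 1 ≤ n := hsum'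
      have hbt' := auxGlb h1 h2 hrec (t'+2) (by omega)
      have egt' : G (t'+1) = G t' + gap G (t'+1) := auxGadd hm t'
      have hst' : auxStart G n (t'+1,a') = G (t'+1) - a' := rfl
      rw [hst'] at heq
      have hiff := auxWin_eq_iff hG (by omega) (by omega) heq
      have hQ1' : auxQ G (G (t'+1) - a' + a') := auxSpecCb hm hak'
      have hQ2' : auxQ G (G (t'+1) - a' + (a' + gap G (t'+2))) := auxSpecCd hm hak'
      have haa : a = a' := by
        by_contra hne
        rcases Nat.lt_or_ge a a' with h | h
        · exact auxSpecCa hm hak' a h ((hiff a han).mp hQ1)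
        · exact auxSpecCa hm hak a' (by omega) ((hiff a' han').mpr hQ1')
      subst haa
      have hgle : gap G (t+2) ≤ gap G (t'+2) := by
        by_contra hlt
        push_neg at hlt
        exact auxSpecCc hm hak (a + gap G (t'+2)) (by omega) (by omega)
          ((hiff _ (by omega)).mpr hQ2')
      have hgle' : gap G (t'+2) ≤ gap G (t+2) := by
        by_contra hlt
        push_neg at hlt
        exact auxSpecCc hm hak' (a + gap G (t+2)) (by omega) (by omega)
          ((hiff _ (by omega)).mp hQ2)
      have htt : t = t' := by
        by_contra hne
        rcases Nat.lt_or_ge t t' with h | h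
        · have := auxGmono h1 h12 h2 hrec (t+2) (t'+2) (by omega) (by omega); omega
        · have := auxGmono h1 h12 h2 hrec (t'+2) (t+2) (by omega) (by omega); omega
      rw [htt]

end Master4

section Master5
variable {G : ℕ → ℕ}

lemma auxGmono_le (h1 : 2 ≤ gap G 1) (h12 : gap G 1 < gap G 2) (h2 : gap G 2 = 4)
    (hrec : ∀ i, 1 ≤ i → gap G (i+2) = gap G i + gap G (i+1))
    {i j : ℕ} (hi : 1 ≤ i) (hij : i ≤ j) : gap G i ≤ gap G j := by
  rcases Nat.eq_or_lt_of_le hij with rfl | h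
  · exact le_refl _
  · exact (auxGmono h1 h12 h2 hrec i j hi h).le

lemma auxP_card (G : ℕ → ℕ) (n : ℕ) : (auxP G n).card = 1 + n + (auxC G n).card := by
  rw [auxP, Finset.card_insert_of_notMem, Finset.card_union_of_disjoint]
  · rw [Finset.card_image_of_injective _ (fun a b h => by simpa using h), Finset.card_range]
    omega
  · rw [Finset.disjoint_left]
    rintro ⟨k, a⟩ him hC
    simp only [Finset.mem_image, Finset.mem_range, Prod.mk.injEq] at him
    rw [auxC_mem] at hC
    obtain ⟨b, hb, hbk, hba⟩ := him
    omega
  · intro hmem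
    rw [Finset.mem_union] at hmem
    rcases hmem with h | h
    · simp only [Finset.mem_image, Finset.mem_range, Prod.mk.injEq] at h
      obtain ⟨b, hb, hbk, hba⟩ := h
      omega
    · rw [auxC_mem] at h
      omega

lemma auxC_empty (h1 : 2 ≤ gap G 1) (h12 : gap G 1 < gap G 2) (h2 : gap G 2 = 4)
    (hrec : ∀ i, 1 ≤ i → gap G (i+2) = gap G i + gap G (i+1))
    {n : ℕ} (hn : n ≤ 4) : auxC G n = ∅ := by
  apply Finset.eq_empty_of_forall_notMem
  rintro ⟨k, a⟩ hk
  rw [auxC_mem] at hk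
  have h4 : gap G 2 ≤ gap G (k+1) := auxGmono_le h1 h12 h2 hrec (by omega) (by omega)
  omega

lemma auxC_step (h1 : 2 ≤ gap G 1) (h12 : gap G 1 < gap G 2) (h2 : gap G 2 = 4)
    (hrec : ∀ i, 1 ≤ i → gap G (i+2) = gap G i + gap G (i+1))
    {n : ℕ} (hn : 4 ≤ n) :
    (auxC G (n+1)).card = (auxC G n).card + 1 := by
  classical
  set k0 := Nat.findGreatest (fun k => gap G (k+1) ≤ n) n with hk0def
  have hP1 : gap G (1+1) ≤ n := by
    have e : gap G (1+1) = 4 := h2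
    omega
  have hk0spec : gap G (k0+1) ≤ n := Nat.findGreatest_spec (P := fun k => gap G (k+1) ≤ n) (m := 1) (by omega) hP1
  have hk0ge1 : 1 ≤ k0 := Nat.le_findGreatest (P := fun k => gap G (k+1) ≤ n) (by omega) hP1
  have hk0le : k0 ≤ n := Nat.findGreatest_le n
  have hk0max : n < gap G (k0+2) := by
    by_contra hc
    push_neg at hc
    have hb : gap G (k0+2) ≥ k0+3 := auxGlb h1 h2 hrec (k0+2) (by omega)
    have := Nat.findGreatest_is_greatest (show k0 < k0+1 by omega) (show k0+1 ≤ n by omega)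
    exact this (show gap G (k0+1+1) ≤ n from hc)
  have hrk0 : gap G (k0+2) = gap G k0 + gap G (k0+1) := hrec k0 hk0ge1
  set a0 := n - gap G (k0+1) with ha0def
  have hset : auxC G (n+1) = insert (k0, a0) (auxC G n) := by
    ext q
    obtain ⟨k, a⟩ := q
    rw [auxC_mem, Finset.mem_insert, auxC_mem, Prod.mk.injEq]
    constructor
    · rintro ⟨hkn, han, hk1, hak, hsum⟩
      have hb : gap G (k+1) ≥ k+2 := auxGlb h1 h2 hrec (k+1) (by omega)
      rcases Nat.lt_or_ge (a + gap G (k+1) + 1) (n+1) with h | h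
      · right
        exact ⟨by omega, by omega, hk1, hak, by omega⟩
      · left
        have heq : a + gap G (k+1) + 1 = n + 1 := by omega
        have hrk : gap G (k+2) = gap G k + gap G (k+1) := hrec k hk1
        have hkk0 : k = k0 := by
          by_contra hne
          rcases Nat.lt_or_ge k k0 with hlt | hge
          · have := auxGmono_le h1 h12 h2 hrec (show 1 ≤ k+2 by omega) (show k+2 ≤ k0+1 by omega)
            omega
          · have := auxGmono_le h1 h12 h2 hrec (show 1 ≤ k0+2 by omega) (show k0+2 ≤ k+1 by omega)
            omega
        subst hkk0
        omega
    · rintro (⟨rfl, rfl⟩ | ⟨hkn, han, hk1, hak, hsum⟩)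
      · have hb : gap G (k0+1) ≥ k0+2 := auxGlb h1 h2 hrec (k0+1) (by omega)
        refine ⟨by omega, by omega, by omega, by omega, by omega⟩
      · exact ⟨by omega, by omega, hk1, hak, by omega⟩
  rw [hset, Finset.card_insert_of_notMem]
  rw [auxC_mem]
  omega

lemma auxC_card (h1 : 2 ≤ gap G 1) (h12 : gap G 1 < gap G 2) (h2 : gap G 2 = 4)
    (hrec : ∀ i, 1 ≤ i → gap G (i+2) = gap G i + gap G (i+1))
    {n : ℕ} (hn : 4 ≤ n) : (auxC G n).card = n - 4 := by
  induction n, hn using Nat.le_induction with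
  | base => rw [auxC_empty h1 h12 h2 hrec (by omega)]; rfl
  | succ m hm ih => rw [auxC_step h1 h12 h2 hrec hm, ih]; omega

end Master5

section Master6
variable {w : ℕ → Fin 2} {G : ℕ → ℕ}

lemma auxMaster (hG : OneDistrib w G) (h1 : 2 ≤ gap G 1) (h12 : gap G 1 < gap G 2)
    (h2 : gap G 2 = 4)
    (hrec : ∀ i, 1 ≤ i → gap G (i+2) = gap G i + gap G (i+1))
    {n : ℕ} (hn : 1 ≤ n) :
    complexity w n = 1 + n + (auxC G n).card := by
  have h0 := hG.1
  have hm := hG.2.1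
  have hb1 := auxGlb h1 h2 hrec (n+1) (by omega)
  have eg : G (n+1) = G n + gap G (n+1) := auxGadd hm n
  have hpos : ∀ q ∈ auxP G n, 1 ≤ auxStart G n q := by
    intro q hq
    rw [auxP_mem] at hq
    rcases hq with rfl | ⟨a, han, rfl⟩ | hC
    · show 1 ≤ G (n+1) + 1; omega
    · show 1 ≤ G (n+1) - a; omega
    · obtain ⟨k, a⟩ := q
      rw [auxC_mem] at hC
      obtain ⟨-, -, hk1, hak, -⟩ := hC
      obtain ⟨t, rfl⟩ : ∃ s, k = s+1 := ⟨k-1, by omega⟩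
      have egt : G (t+1) = G t + gap G (t+1) := auxGadd hm t
      show 1 ≤ G (t+1) - a
      omega
  have hset : {u : List (Fin 2) | u.length = n ∧ IsFactor w u}
      = (fun q => auxWin w (auxStart G n q) n) '' ↑(auxP G n) := by
    ext u
    simp only [Set.mem_setOf_eq, Set.mem_image, Finset.mem_coe]
    rw [auxFactor_iff]
    constructor
    · rintro ⟨i, hi, rfl⟩
      obtain ⟨q, hq, hqe⟩ := auxSurj hG h1 h12 h2 hrec hn hi
      exact ⟨q, hq, hqe⟩
    · rintro ⟨q, hq, rfl⟩
      exact ⟨auxStart G n q, hpos q hq, rfl⟩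
  rw [complexity, hset, Set.ncard_image_of_injOn (auxInj hG h1 h12 h2 hrec hn),
    Set.ncard_coe_finset, auxP_card]

end Master6






lemma Gu_succ (i : ℕ) : Gu (i+1) = Gu i + gu (i+1) := Finset.sum_range_succ gu (i+1)
lemma Gv_succ (i : ℕ) : Gv (i+1) = Gv i + gv (i+1) := Finset.sum_range_succ gv (i+1)

lemma gapGu (i : ℕ) : gap Gu (i+1) = gu (i+1) := by
  have h := Gu_succ i
  simp only [gap, Nat.add_sub_cancel]
  omega

lemma gapGv (i : ℕ) : gap Gv (i+1) = gv (i+1) := by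
  have h := Gv_succ i
  simp only [gap, Nat.add_sub_cancel]
  omega

lemma hrecGu : ∀ i, 1 ≤ i → gap Gu (i+2) = gap Gu i + gap Gu (i+1) := by
  intro i hi
  obtain ⟨m, rfl⟩ : ∃ m, i = m+1 := ⟨i-1, by omega⟩
  have e1 : gap Gu (m+3) = gu (m+3) := gapGu (m+2)
  have e2 : gap Gu (m+1) = gu (m+1) := gapGu m
  have e3 : gap Gu (m+2) = gu (m+2) := gapGu (m+1)
  have e4 : gu (m+3) = gu (m+1) + gu (m+2) := rfl
  show gap Gu (m+3) = gap Gu (m+1) + gap Gu (m+2)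
  omega

lemma hrecGv : ∀ i, 1 ≤ i → gap Gv (i+2) = gap Gv i + gap Gv (i+1) := by
  intro i hi
  obtain ⟨m, rfl⟩ : ∃ m, i = m+1 := ⟨i-1, by omega⟩
  have e1 : gap Gv (m+3) = gv (m+3) := gapGv (m+2)
  have e2 : gap Gv (m+1) = gv (m+1) := gapGv m
  have e3 : gap Gv (m+2) = gv (m+2) := gapGv (m+1)
  have e4 : gv (m+3) = gv (m+1) + gv (m+2) := rfl
  show gap Gv (m+3) = gap Gv (m+1) + gap Gv (m+2)
  omega


theorem stmt15 (wu wv : ℕ → Fin 2)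
    (hu : OneDistrib wu Gu) (hv : OneDistrib wv Gv) :
    (∃ p, 1 ≤ p ∧ wu p ≠ wv p) ∧
    (∀ n, 1 ≤ n → n ≤ 4 → complexity wu n = n + 1 ∧ complexity wv n = n + 1) ∧
    (∀ n, 5 ≤ n → complexity wu n = 2 * n - 3 ∧ complexity wv n = 2 * n - 3) := by
  have h1u : gap Gu 1 = 2 := (gapGu 0).trans rfl
  have h2u : gap Gu 2 = 4 := (gapGu 1).trans rfl
  have h1v : gap Gv 1 = 3 := (gapGv 0).trans rfl
  have h2v : gap Gv 2 = 4 := (gapGv 1).trans rfl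
  refine ⟨⟨2, by omega, ?_⟩, ?_, ?_⟩
  · have hGu1 : Gu 1 = 2 := by
      show ∑ j ∈ Finset.range 2, gu j = 2
      rw [Finset.sum_range_succ, Finset.sum_range_one]
      rfl
    have hw1 : wu 2 = 1 := (hu.2.2 2 (by omega)).mpr ⟨1, le_refl 1, hGu1⟩
    have hw2 : wv 2 ≠ 1 := by
      intro h
      obtain ⟨i, hi1, hi2⟩ := (hv.2.2 2 (by omega)).mp h
      have hGv1 : Gv 1 = 3 := by
        show ∑ j ∈ Finset.range 2, gv j = 3
        rw [Finset.sum_range_succ, Finset.sum_range_one]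
        rfl
      have := hv.2.1.monotone hi1
      omega
    rw [hw1]
    exact fun h => hw2 h.symm
  · intro n hn1 hn4
    constructor
    · rw [auxMaster hu (by omega) (by omega) h2u hrecGu hn1,
        auxC_empty (by omega) (by omega) h2u hrecGu hn4, Finset.card_empty]
      omega
    · rw [auxMaster hv (by omega) (by omega) h2v hrecGv hn1,
        auxC_empty (by omega) (by omega) h2v hrecGv hn4, Finset.card_empty]
      omega
  · intro n hn
    constructor
    · rw [auxMaster hu (by omega) (by omega) h2u hrecGu (by omega),
        auxC_card (by omega) (by omega) h2u hrecGu (by omega)]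
      omega
    · rw [auxMaster hv (by omega) (by omega) h2v hrecGv (by omega),
        auxC_card (by omega) (by omega) h2v hrecGv (by omega)]
      omega
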